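/- Let H be a map on the space of signals u : [0,∞) → ℝⁿ that are square-integrable on every bounded interval, and let Π be a real symmetric 2×2 matrix with entries π₁₁, π₁₂, π₂₂. Then the following are equivalent: (i) for all inputs u₁, u₂ and all T > 0, writing Δu = u₁ − u₂ and Δy = Hu₁ − Hu₂, one has π₁₁·∫₀ᵀ |Δu(t)|² dt + 2·π₁₂·∫₀ᵀ Δu(t)ᵀΔy(t) dt + π₂₂·∫₀ᵀ |Δy(t)|² dt ≥ 0 (the static incremental hard IQC with multiplier Π ⊗ I); (ii) SRG_e(H) ⊆ S(Π). -/

import Mathlib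

open scoped RealInnerProductSpace Classical
open MeasureTheory

/-- The measure on `[0,∞)`. -/
noncomputable def posMeasure : Measure ℝ := volume.restrict (Set.Ici (0 : ℝ))

/-- Truncation of a signal: `u_T` equals `u` on `[0,T]` and `0` on `(T,∞)`. -/
noncomputable def trunc {E : Type*} [Zero E] (u : ℝ → E) (T : ℝ) : ℝ → E :=
  fun t => if t ≤ T then u t else 0

/-- The space of signals `[0,∞) → ℝⁿ` that are square-integrable on every bounded
interval (i.e. every truncation lies in `L²`). -/
def LocL2 (n : ℕ) : Type :=
  {u : ℝ → EuclideanSpace ℝ (Fin n) // ∀ T : ℝ, MemLp (trunc u T) 2 posMeasure}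

/-- The region `S(Π)` in the complex plane associated with a real symmetric 2×2 matrix `Π`
with entries `π₁₁, π₁₂, π₂₂`:  `S(Π) = {z ∈ ℂ : π₁₁ + 2·π₁₂·Re z + π₂₂·|z|² ≥ 0}`. -/
def SRegion (p11 p12 p22 : ℝ) : Set ℂ :=
  {z : ℂ | 0 ≤ p11 + 2 * p12 * z.re + p22 * ‖z‖ ^ 2}

/-- SRG point `z₊(u, y) = (‖y‖/‖u‖)·exp(+i·arccos(⟪u,y⟫/(‖u‖‖y‖)))` (and `0` for `y = 0`). -/
noncomputable def srgPlus {E : Type*} [NormedAddCommGroup E] [InnerProductSpace ℝ E]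
    (u y : E) : ℂ :=
  if y = 0 then 0 else
    ((‖y‖ / ‖u‖ : ℝ) : ℂ) *
      Complex.exp (Complex.I * (Real.arccos (⟪u, y⟫ / (‖u‖ * ‖y‖)) : ℝ))

/-- SRG point `z₋(u, y) = (‖y‖/‖u‖)·exp(−i·arccos(⟪u,y⟫/(‖u‖‖y‖)))` (and `0` for `y = 0`). -/
noncomputable def srgMinus {E : Type*} [NormedAddCommGroup E] [InnerProductSpace ℝ E]
    (u y : E) : ℂ :=
  if y = 0 then 0 else
    ((‖y‖ / ‖u‖ : ℝ) : ℂ) *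
      Complex.exp (-Complex.I * (Real.arccos (⟪u, y⟫ / (‖u‖ * ‖y‖)) : ℝ))

/-- The hard scaled relative graph of a map `H` on locally square-integrable signals:
`SRG_e(H) = ⋃ {z_±((Δu)_T, (Δy)_T)}` over all inputs `u₁, u₂` and all `T > 0` with
`(Δu)_T ≠ 0` (as an element of `L²`), where `Δu = u₁ − u₂` and `Δy = Hu₁ − Hu₂`. -/
noncomputable def hardSRG {n : ℕ} (H : LocL2 n → LocL2 n) : Set ℂ :=
  {z : ℂ | ∃ (u₁ u₂ : LocL2 n) (T : ℝ), 0 < T ∧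
    ∃ (h₁ : MemLp (trunc (fun t => u₁.1 t - u₂.1 t) T) 2 posMeasure)
      (h₂ : MemLp (trunc (fun t => (H u₁).1 t - (H u₂).1 t) T) 2 posMeasure),
      h₁.toLp _ ≠ 0 ∧ (z = srgPlus (h₁.toLp _) (h₂.toLp _) ∨
        z = srgMinus (h₁.toLp _) (h₂.toLp _))}

/- ### Auxiliary lemmas -/

section Aux

lemma trunc_sub' {E : Type*} [SubtractionMonoid E] (f g : ℝ → E) (T : ℝ) :
    trunc (fun t => f t - g t) T = fun t => trunc f T t - trunc g T t := by
  funext t; simp only [trunc]; split <;> simp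

lemma trunc_smul' {E : Type*} [AddCommGroup E] [Module ℝ E] (c : ℝ) (f : ℝ → E) (T : ℝ) :
    trunc (fun t => c • f t) T = fun t => c • trunc f T t := by
  funext t; simp only [trunc]; split <;> simp

lemma trunc_add' {E : Type*} [AddMonoid E] (f g : ℝ → E) (T : ℝ) :
    trunc (fun t => f t + g t) T = fun t => trunc f T t + trunc g T t := by
  funext t; simp only [trunc]; split <;> simp

/-- `MemLp` of truncated differences of locally-`L²` signals. -/
lemma memLp_truncSub {n : ℕ} (A B : LocL2 n) (T : ℝ) :
    MemLp (trunc (fun t => A.1 t - B.1 t) T) 2 posMeasure := by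
  rw [trunc_sub']
  exact (A.2 T).sub (B.2 T)

lemma inner_toLp_eq {n : ℕ} {f g : ℝ → EuclideanSpace ℝ (Fin n)} {T : ℝ} (hT : 0 < T)
    (hf : MemLp (trunc f T) 2 posMeasure) (hg : MemLp (trunc g T) 2 posMeasure) :
    ⟪hf.toLp _, hg.toLp _⟫ = ∫ t in (0:ℝ)..T, ⟪f t, g t⟫ := by
  rw [L2.inner_def]
  have h1 : ∫ a, ⟪(hf.toLp _) a, (hg.toLp _) a⟫ ∂posMeasure
      = ∫ a, ⟪trunc f T a, trunc g T a⟫ ∂posMeasure := by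
    refine integral_congr_ae ?_
    filter_upwards [hf.coeFn_toLp, hg.coeFn_toLp] with a h1 h2
    rw [h1, h2]
  rw [h1]
  have h2 : ∀ a, ⟪trunc f T a, trunc g T a⟫
      = Set.indicator (Set.Iic T) (fun t => ⟪f t, g t⟫) a := by
    intro a
    simp only [trunc, Set.indicator, Set.mem_Iic]
    split <;> simp
  simp_rw [h2]
  rw [posMeasure, integral_indicator measurableSet_Iic,
    Measure.restrict_restrict measurableSet_Iic]
  rw [intervalIntegral.integral_of_le hT.le]
  have : Set.Iic T ∩ Set.Ici 0 = Set.Icc 0 T := by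
    ext x; simp [Set.mem_Icc, and_comm]
  rw [this, ← MeasureTheory.integral_Icc_eq_integral_Ioc]

lemma norm_sq_toLp {n : ℕ} {f : ℝ → EuclideanSpace ℝ (Fin n)} {T : ℝ} (hT : 0 < T)
    (hf : MemLp (trunc f T) 2 posMeasure) :
    ‖hf.toLp _‖ ^ 2 = ∫ t in (0:ℝ)..T, ‖f t‖ ^ 2 := by
  rw [← real_inner_self_eq_norm_sq, inner_toLp_eq hT hf hf]
  simp_rw [real_inner_self_eq_norm_sq]

lemma srg_re_abs {E : Type*} [NormedAddCommGroup E] [InnerProductSpace ℝ E]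
    (u y : E) (hu : u ≠ 0) :
    (srgPlus u y).re = ⟪u, y⟫ / ‖u‖ ^ 2 ∧ ‖srgPlus u y‖ = ‖y‖ / ‖u‖ ∧
    (srgMinus u y).re = ⟪u, y⟫ / ‖u‖ ^ 2 ∧ ‖srgMinus u y‖ = ‖y‖ / ‖u‖ := by
  have hun : ‖u‖ ≠ 0 := norm_ne_zero_iff.mpr hu
  by_cases hy : y = 0
  · subst hy; simp [srgPlus, srgMinus]
  have hyn : ‖y‖ ≠ 0 := norm_ne_zero_iff.mpr hy
  have hcs := abs_real_inner_le_norm u y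
  have hb : |⟪u, y⟫ / (‖u‖ * ‖y‖)| ≤ 1 := by
    rw [abs_div, abs_of_pos (by positivity : (0:ℝ) < ‖u‖ * ‖y‖)]
    rw [div_le_one (by positivity)]
    exact hcs
  have hcos : Real.cos (Real.arccos (⟪u, y⟫ / (‖u‖ * ‖y‖))) = ⟪u, y⟫ / (‖u‖ * ‖y‖) :=
    Real.cos_arccos (by linarith [abs_le.mp hb]) (by linarith [abs_le.mp hb])
  set θ := Real.arccos (⟪u, y⟫ / (‖u‖ * ‖y‖))
  have hre : ∀ s : ℝ, ((Complex.exp ((s : ℂ) * Complex.I * (θ:ℝ)))).re = Real.cos (s * θ) := by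
    intro s
    rw [show ((s:ℂ) * Complex.I * (θ:ℝ)) = ((s*θ : ℝ):ℂ) * Complex.I by push_cast; ring,
      Complex.exp_ofReal_mul_I_re]
  constructor
  · rw [srgPlus, if_neg hy]
    rw [Complex.mul_re]
    have : (Complex.I * (θ:ℝ)) = ((1:ℝ):ℂ) * Complex.I * (θ:ℝ) := by push_cast; ring
    rw [this, Complex.ofReal_re, Complex.ofReal_im]
    rw [hre 1, one_mul, hcos]
    field_simp
    ring
  refine ⟨?_, ?_, ?_⟩
  · rw [srgPlus, if_neg hy, norm_mul, Complex.norm_real, Real.norm_eq_abs,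
      show (Complex.I * (θ:ℝ)) = ((θ:ℝ):ℂ) * Complex.I by ring, Complex.norm_exp_ofReal_mul_I]
    rw [abs_of_nonneg (by positivity), mul_one]
  · rw [srgMinus, if_neg hy]
    rw [Complex.mul_re]
    have : (-Complex.I * (θ:ℝ)) = ((-1:ℝ):ℂ) * Complex.I * (θ:ℝ) := by push_cast; ring
    rw [this, Complex.ofReal_re, Complex.ofReal_im]
    rw [hre (-1), neg_one_mul, Real.cos_neg, hcos]
    field_simp
    ring
  · rw [srgMinus, if_neg hy, norm_mul, Complex.norm_real, Real.norm_eq_abs,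
      show (-Complex.I * (θ:ℝ)) = ((-θ:ℝ):ℂ) * Complex.I by push_cast; ring,
      Complex.norm_exp_ofReal_mul_I]
    rw [abs_of_nonneg (by positivity), mul_one]

lemma mem_SRegion_iff {E : Type*} [NormedAddCommGroup E] [InnerProductSpace ℝ E]
    (p11 p12 p22 : ℝ) (u y : E) (hu : u ≠ 0) (z : ℂ)
    (hz : z = srgPlus u y ∨ z = srgMinus u y) :
    z ∈ SRegion p11 p12 p22 ↔
      0 ≤ p11 * ‖u‖ ^ 2 + 2 * p12 * ⟪u, y⟫ + p22 * ‖y‖ ^ 2 := by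
  obtain ⟨h1, h2, h3, h4⟩ := srg_re_abs u y hu
  have hun : (0:ℝ) < ‖u‖ ^ 2 := pow_pos (norm_pos_iff.mpr hu) 2
  have key : ∀ w : ℂ, w.re = ⟪u, y⟫ / ‖u‖ ^ 2 → ‖w‖ = ‖y‖ / ‖u‖ →
      (w ∈ SRegion p11 p12 p22 ↔
        0 ≤ p11 * ‖u‖ ^ 2 + 2 * p12 * ⟪u, y⟫ + p22 * ‖y‖ ^ 2) := by
    intro w hw1 hw2
    rw [SRegion, Set.mem_setOf_eq, hw1, hw2, div_pow]
    rw [show p11 + 2 * p12 * (⟪u, y⟫ / ‖u‖ ^ 2) + p22 * (‖y‖ ^ 2 / ‖u‖ ^ 2)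
        = (p11 * ‖u‖ ^ 2 + 2 * p12 * ⟪u, y⟫ + p22 * ‖y‖ ^ 2) / ‖u‖ ^ 2 by field_simp]
    constructor
    · intro h
      have := mul_nonneg h hun.le
      rwa [div_mul_cancel₀ _ hun.ne'] at this
    · intro h
      exact div_nonneg h hun.le
  rcases hz with rfl | rfl
  · exact key _ h1 h2
  · exact key _ h3 h4

lemma quad_contra (p11 p12 p22 a b ip : ℝ) (hp : p22 < 0) (ha : 0 < a)
    (hip : |ip| ≤ a * b)
    (hb : a * ((|p11| + 2 * |p12| + 1) / (-p22) + 1) ≤ b)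
    (h : 0 ≤ p11 * a ^ 2 + 2 * p12 * ip + p22 * b ^ 2) : False := by
  have hc : 0 < -p22 := by linarith
  set X := |p11| + 2 * |p12| + 1 with hX
  have hX0 : 0 < X := by positivity
  have hdiv : 0 < X / (-p22) := div_pos hX0 hc
  have hb0 : 0 < b := lt_of_lt_of_le (by nlinarith) hb
  have hab : a ≤ b := le_trans (by nlinarith) hb
  have h1 : 2 * p12 * ip ≤ 2 * |p12| * (a * b) := by
    have h0 : p12 * ip ≤ |p12| * |ip| := by
      calc p12 * ip ≤ |p12 * ip| := le_abs_self _
        _ = |p12| * |ip| := abs_mul _ _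
    nlinarith [mul_le_mul_of_nonneg_left hip (abs_nonneg p12)]
  have h2 : p11 * a ^ 2 ≤ |p11| * (a * b) := by
    have h0 : p11 * a ^ 2 ≤ |p11| * a ^ 2 :=
      mul_le_mul_of_nonneg_right (le_abs_self p11) (sq_nonneg a)
    nlinarith [mul_le_mul_of_nonneg_left hab (mul_nonneg (abs_nonneg p11) ha.le)]
  have key : p22 * (X / (-p22) + 1) = -X + p22 := by
    rw [mul_add, mul_one, mul_div_assoc', div_neg, mul_comm p22 X, mul_div_assoc, div_self hp.ne, mul_one]
  have h3 : p22 * b ^ 2 ≤ (-X + p22) * (a * b) := by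
    have h4 : (p22 * b) * b ≤ (p22 * b) * (a * (X / (-p22) + 1)) :=
      mul_le_mul_of_nonpos_left hb (by nlinarith)
    calc p22 * b ^ 2 = (p22 * b) * b := by ring
      _ ≤ (p22 * b) * (a * (X / (-p22) + 1)) := h4
      _ = (p22 * (X / (-p22) + 1)) * (a * b) := by ring
      _ = (-X + p22) * (a * b) := by rw [key]
  nlinarith [mul_pos ha hb0]

end Aux

/-- A map `H` on locally square-integrable signals satisfies the static incremental hard
IQC with multiplier `Π ⊗ I` — i.e. for all inputs `u₁, u₂` and all `T > 0`, with
`Δu = u₁ − u₂`, `Δy = Hu₁ − Hu₂`,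
`π₁₁·∫₀ᵀ|Δu|² + 2π₁₂·∫₀ᵀ ΔuᵀΔy + π₂₂·∫₀ᵀ|Δy|² ≥ 0` — if and only if
`SRG_e(H) ⊆ S(Π)`. -/
theorem static_hard_iqc_iff_hard_srg_subset (n : ℕ) (H : LocL2 n → LocL2 n)
    (p11 p12 p22 : ℝ) :
    (∀ (u₁ u₂ : LocL2 n) (T : ℝ), 0 < T →
        0 ≤ p11 * (∫ t in (0:ℝ)..T, ‖u₁.1 t - u₂.1 t‖ ^ 2) +
            2 * p12 * (∫ t in (0:ℝ)..T, ⟪u₁.1 t - u₂.1 t, (H u₁).1 t - (H u₂).1 t⟫) +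
            p22 * (∫ t in (0:ℝ)..T, ‖(H u₁).1 t - (H u₂).1 t‖ ^ 2)) ↔
      hardSRG H ⊆ SRegion p11 p12 p22 := by
  constructor
  · -- IQC ⇒ SRG ⊆ S
    intro hIQC z hz
    obtain ⟨u₁, u₂, T, hT, h₁, h₂, hne, hzeq⟩ := hz
    have e1 : ‖h₁.toLp _‖ ^ 2 = ∫ t in (0:ℝ)..T, ‖u₁.1 t - u₂.1 t‖ ^ 2 :=
      norm_sq_toLp hT h₁
    have e2 : ⟪h₁.toLp _, h₂.toLp _⟫
        = ∫ t in (0:ℝ)..T, ⟪u₁.1 t - u₂.1 t, (H u₁).1 t - (H u₂).1 t⟫ :=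
      inner_toLp_eq hT h₁ h₂
    have e3 : ‖h₂.toLp _‖ ^ 2 = ∫ t in (0:ℝ)..T, ‖(H u₁).1 t - (H u₂).1 t‖ ^ 2 :=
      norm_sq_toLp hT h₂
    have hineq := hIQC u₁ u₂ T hT
    rw [← e1, ← e2, ← e3] at hineq
    exact (mem_SRegion_iff p11 p12 p22 _ _ hne z hzeq).mpr hineq
  · -- SRG ⊆ S ⇒ IQC
    intro hS u₁ u₂ T hT
    have h₁ := memLp_truncSub u₁ u₂ T
    have h₂ := memLp_truncSub (H u₁) (H u₂) T
    have e1 : ‖h₁.toLp _‖ ^ 2 = ∫ t in (0:ℝ)..T, ‖u₁.1 t - u₂.1 t‖ ^ 2 :=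
      norm_sq_toLp hT h₁
    have e2 : ⟪h₁.toLp _, h₂.toLp _⟫
        = ∫ t in (0:ℝ)..T, ⟪u₁.1 t - u₂.1 t, (H u₁).1 t - (H u₂).1 t⟫ :=
      inner_toLp_eq hT h₁ h₂
    have e3 : ‖h₂.toLp _‖ ^ 2 = ∫ t in (0:ℝ)..T, ‖(H u₁).1 t - (H u₂).1 t‖ ^ 2 :=
      norm_sq_toLp hT h₂
    rw [← e1, ← e2, ← e3]
    by_cases hU : h₁.toLp _ = 0
    swap
    · -- nondegenerate case: use the SRG point directly
      have hmem : srgPlus (h₁.toLp _) (h₂.toLp _) ∈ hardSRG H :=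
        ⟨u₁, u₂, T, hT, h₁, h₂, hU, Or.inl rfl⟩
      exact (mem_SRegion_iff p11 p12 p22 _ _ hU _ (Or.inl rfl)).mp (hS hmem)
    · -- degenerate case: `(Δu)_T = 0` in `L²`
      rw [hU]
      rw [inner_zero_left, norm_zero, mul_zero]
      rw [show (0:ℝ) ^ 2 = 0 by norm_num, mul_zero, zero_add, zero_add]
      obtain ⟨Y, hYdef⟩ : ∃ Y, Y = h₂.toLp _ := ⟨_, rfl⟩
      rw [← hYdef]
      by_cases hY : Y = 0
      · rw [hY]; simp
      rcases le_or_gt 0 p22 with h22 | h22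
      · exact mul_nonneg h22 (sq_nonneg _)
      exfalso
      -- the truncation of `Δu` vanishes a.e.
      have hf0 : trunc (fun t => u₁.1 t - u₂.1 t) T =ᵐ[posMeasure] 0 := by
        rw [← MemLp.toLp_eq_toLp_iff h₁ (MemLp.zero (p := 2) (μ := posMeasure))]
        rw [hU, MemLp.toLp_zero]
      -- the perturbation direction `g = Δy`
      obtain ⟨g, hgdef⟩ : ∃ g, g = fun t => (H u₁).1 t - (H u₂).1 t := ⟨_, rfl⟩
      have heL : ∀ T' : ℝ, MemLp (trunc g T') 2 posMeasure := by
        rw [hgdef]; exact fun T' => memLp_truncSub (H u₁) (H u₂) T'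
      have hYcoe : ⇑Y =ᵐ[posMeasure] trunc g T := by
        rw [hYdef, hgdef]; exact h₂.coeFn_toLp
      obtain ⟨M, hMdef⟩ : ∃ M : ℝ, M = (|p11| + 2 * |p12| + 1) / (-p22) + 1 := ⟨_, rfl⟩
      have hM0 : 0 < M := by
        have : 0 < (|p11| + 2 * |p12| + 1) / (-p22) :=
          div_pos (by positivity) (by linarith)
        rw [hMdef]; linarith
      obtain ⟨ε, hεdef⟩ : ∃ ε : ℝ, ε = 1 / (2 * M) := ⟨_, rfl⟩
      have hε0 : 0 < ε := by rw [hεdef]; exact div_pos one_pos (by linarith)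
      -- the perturbed input
      obtain ⟨v, hv⟩ : ∃ v : LocL2 n, v.1 = fun t => u₁.1 t + ε • g t := by
        refine ⟨⟨fun t => u₁.1 t + ε • g t, fun T' => ?_⟩, rfl⟩
        rw [trunc_add', trunc_smul']
        exact (u₁.2 T').add ((heL T').const_smul ε)
      have hεY : ε • Y ≠ 0 := smul_ne_zero hε0.ne' hY
      have hnεY : ‖ε • Y‖ = ε * ‖Y‖ := by
        rw [norm_smul, Real.norm_eq_abs, abs_of_pos hε0]
      -- the two truncated input increments both equal `ε • Y` in `L²`
      have hU1fun : trunc (fun t => v.1 t - u₁.1 t) T = fun t => ε • trunc g T t := by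
        funext s
        simp only [trunc, hv]
        split
        · abel
        · simp
      have hU2fun : trunc (fun t => v.1 t - u₂.1 t) T
          = fun t => trunc (fun s => u₁.1 s - u₂.1 s) T t + ε • trunc g T t := by
        funext s
        simp only [trunc, hv]
        split
        · abel
        · simp
      have hU1 : (memLp_truncSub v u₁ T).toLp _ = ε • Y := by
        refine Lp.ext ?_
        filter_upwards [(memLp_truncSub v u₁ T).coeFn_toLp, Lp.coeFn_smul ε Y,
          hYcoe] with t ha hb hc
        rw [ha, hb, hU1fun, Pi.smul_apply, hc]
      have hU2 : (memLp_truncSub v u₂ T).toLp _ = ε • Y := by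
        refine Lp.ext ?_
        filter_upwards [(memLp_truncSub v u₂ T).coeFn_toLp, Lp.coeFn_smul ε Y,
          hYcoe, hf0] with t ha hb hc hd
        rw [ha, hb, hU2fun, Pi.smul_apply, hc]
        show trunc (fun s => u₁.1 s - u₂.1 s) T t + ε • trunc g T t = ε • trunc g T t
        rw [hd]
        simp
      -- output increments
      have hYsumfun : trunc (fun t => (H v).1 t - (H u₂).1 t) T
          = fun t => trunc (fun s => (H v).1 s - (H u₁).1 s) T t + trunc g T t := by
        funext s
        simp only [trunc, hgdef]
        split
        · abel
        · simp
      have hYsum : (memLp_truncSub (H v) (H u₂) T).toLp _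
          = (memLp_truncSub (H v) (H u₁) T).toLp _ + Y := by
        refine Lp.ext ?_
        filter_upwards [(memLp_truncSub (H v) (H u₂) T).coeFn_toLp,
          Lp.coeFn_add ((memLp_truncSub (H v) (H u₁) T).toLp _) Y,
          (memLp_truncSub (H v) (H u₁) T).coeFn_toLp, hYcoe] with t ha hb hc hd
        rw [ha, hb, Pi.add_apply, hc, hd, hYsumfun]
      -- the common contradiction step
      have final : ∀ B : LocL2 n, (memLp_truncSub v B T).toLp _ = ε • Y →
          ‖Y‖ / 2 ≤ ‖(memLp_truncSub (H v) (H B) T).toLp _‖ → False := by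
        intro B hUB hYB
        have hne' : (memLp_truncSub v B T).toLp _ ≠ 0 := by rw [hUB]; exact hεY
        have hmem : srgPlus ((memLp_truncSub v B T).toLp _)
            ((memLp_truncSub (H v) (H B) T).toLp _) ∈ hardSRG H :=
          ⟨v, B, T, hT, memLp_truncSub v B T, memLp_truncSub (H v) (H B) T,
            hne', Or.inl rfl⟩
        have hineq := (mem_SRegion_iff p11 p12 p22 _ _ hne' _ (Or.inl rfl)).mp (hS hmem)
        rw [hUB] at hineq
        refine quad_contra p11 p12 p22 (‖ε • Y‖) ‖(memLp_truncSub (H v) (H B) T).toLp _‖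
          ⟪ε • Y, (memLp_truncSub (H v) (H B) T).toLp _⟫ h22
          (norm_pos_iff.mpr hεY) (abs_real_inner_le_norm _ _) ?_ hineq
        rw [hnεY, ← hMdef, hεdef]
        have hkey : 1 / (2 * M) * ‖Y‖ * M = ‖Y‖ / 2 := by
          field_simp
        rw [hkey]
        exact hYB
      rcases le_or_gt (‖Y‖ / 2) ‖(memLp_truncSub (H v) (H u₁) T).toLp _‖ with hc | hc
      · exact final u₁ hU1 hc
      · refine final u₂ hU2 ?_
        have hle : ‖Y‖ ≤ ‖(memLp_truncSub (H v) (H u₁) T).toLp _‖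
            + ‖(memLp_truncSub (H v) (H u₂) T).toLp _‖ := by
          calc ‖Y‖ = ‖(memLp_truncSub (H v) (H u₂) T).toLp _
                - (memLp_truncSub (H v) (H u₁) T).toLp _‖ := by rw [hYsum]; congr 1; abel
            _ ≤ _ := (norm_sub_le _ _).trans (by rw [add_comm])
        linarith
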